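/- arXiv:2201.08275 — 2 statements merged into one kernel-verified Lean document; each statement's English description precedes it below -/
import Mathlib

section
/- In a deterministic pushdown rewriting system (configurations are pairs of a control state and a stack word, with deterministic trivial rewriting rules depending only on the control state and the top stack symbol), the system admits an infinite rewriting sequence from some configuration if and only if either (a) some configuration (X, ε) with empty stack recurs, i.e. following the rules from (X, ε) returns to (X, ε), or (b) there exist a state X and stack symbol σ such that starting from (X, σ) the rules lead to (X, σω) for some stack word ω without the stack ever becoming empty in between. -/
namespace PushdownRewriting

variable {Q Δ : Type*}

/-- One (partial, deterministic) rewriting step of a pushdown rewriting system: the rule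
depends only on the control state and the top stack symbol (`none` for the empty stack);
it yields a new state and a word replacing the top symbol. -/
def step (rule : Q → Option Δ → Option (Q × List Δ)) :
    Q × List Δ → Option (Q × List Δ)
  | (X, []) => rule X none
  | (X, σ :: S) => (rule X (some σ)).map fun p => (p.1, p.2 ++ S)

/-- Iterated rewriting. -/
def iter (rule : Q → Option Δ → Option (Q × List Δ)) :
    ℕ → Q × List Δ → Option (Q × List Δ)
  | 0, c => some c
  | n + 1, c => (step rule c).bind (iter rule n)

/-- An infinite rewriting sequence starts at `c`. -/
def InfiniteFrom (rule : Q → Option Δ → Option (Q × List Δ)) (c : Q × List Δ) : Prop :=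
  ∀ n : ℕ, (iter rule n c).isSome

end PushdownRewriting


namespace PushdownRewriting

variable {Q Δ : Type*}

theorem iter_add (rule : Q → Option Δ → Option (Q × List Δ)) (m n : ℕ) (c : Q × List Δ) :
    iter rule (m + n) c = (iter rule m c).bind (iter rule n) := by
  induction m generalizing c with
  | zero => simp [iter]
  | succ m ih =>
    have hmn : m + 1 + n = (m + n) + 1 := by omega
    rw [hmn]
    cases h : step rule c with
    | none => simp [iter, h]
    | some c' => simp [iter, h, ih c']

theorem iter_isSome_of_le (rule : Q → Option Δ → Option (Q × List Δ)) {c : Q × List Δ}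
    {k j : ℕ} (hkj : k ≤ j) (h : (iter rule j c).isSome) : (iter rule k c).isSome := by
  have hj : j = k + (j - k) := by omega
  rw [hj, iter_add] at h
  cases hk : iter rule k c with
  | none => rw [hk] at h; simp at h
  | some c' => simp

theorem strip (rule : Q → Option Δ → Option (Q × List Δ)) :
    ∀ (k : ℕ) (X : Q) (w S : List Δ),
    (∀ j ≤ k, ∃ c, iter rule j (X, w ++ S) = some c ∧ S.length < c.2.length) →
    ∃ Y v, v ≠ [] ∧ iter rule k (X, w ++ S) = some (Y, v ++ S) ∧
      iter rule k (X, w) = some (Y, v) := by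
  intro k
  induction k with
  | zero =>
    intro X w S h
    obtain ⟨c, hc, hl⟩ := h 0 le_rfl
    simp [iter] at hc
    subst hc
    refine ⟨X, w, ?_, by simp [iter], by simp [iter]⟩
    rintro rfl
    simp at hl
  | succ k ih =>
    intro X w S h
    obtain ⟨c0, hc0, hl0⟩ := h 0 (Nat.zero_le _)
    simp [iter] at hc0
    subst hc0
    match w with
    | [] => simp at hl0
    | σ :: t =>
      cases hr : rule X (some σ) with
      | none =>
        obtain ⟨c, hc, -⟩ := h (k + 1) le_rfl
        simp [iter, step, hr] at hc
      | some p =>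
        have hstep : ∀ (j : ℕ) (L : List Δ),
            iter rule (j + 1) (X, σ :: L) = iter rule j (p.1, p.2 ++ L) := by
          intro j L; simp [iter, step, hr]
        obtain ⟨Y, v, hv, h1, h2⟩ := ih p.1 (p.2 ++ t) S (by
          intro j hj
          obtain ⟨c, hc, hl⟩ := h (j + 1) (by omega)
          refine ⟨c, ?_, hl⟩
          rw [← hc, List.cons_append, hstep, List.append_assoc])
        refine ⟨Y, v, hv, ?_, ?_⟩
        · rw [List.cons_append, hstep, ← List.append_assoc]; exact h1
        · rw [hstep]; exact h2

theorem dilute (rule : Q → Option Δ → Option (Q × List Δ)) :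
    ∀ (k : ℕ) (X : Q) (w S : List Δ) (Y : Q) (v : List Δ),
    (∀ j < k, ∃ c, iter rule j (X, w) = some c ∧ c.2 ≠ []) →
    iter rule k (X, w) = some (Y, v) →
    iter rule k (X, w ++ S) = some (Y, v ++ S) := by
  intro k
  induction k with
  | zero =>
    intro X w S Y v h hk
    simp [iter] at hk ⊢
    exact ⟨hk.1, by rw [hk.2]⟩
  | succ k ih =>
    intro X w S Y v h hk
    obtain ⟨c0, hc0, hne⟩ := h 0 (Nat.succ_pos k)
    simp [iter] at hc0
    subst hc0
    match w with
    | [] => simp at hne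
    | σ :: t =>
      cases hr : rule X (some σ) with
      | none => simp [iter, step, hr] at hk
      | some p =>
        have hstep : ∀ (j : ℕ) (L : List Δ),
            iter rule (j + 1) (X, σ :: L) = iter rule j (p.1, p.2 ++ L) := by
          intro j L; simp [iter, step, hr]
        rw [hstep] at hk
        rw [List.cons_append, hstep, ← List.append_assoc]
        exact ih p.1 (p.2 ++ t) S Y v (by
          intro j hj
          obtain ⟨c, hc, hne'⟩ := h (j + 1) (by omega)
          refine ⟨c, ?_, hne'⟩
          rw [← hc, hstep]) hk

end PushdownRewriting

open PushdownRewriting in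
/-- A deterministic pushdown rewriting system (over finite state and stack alphabets,
with rules that pop, replace, or push) admits an infinite rewriting sequence from some
configuration iff either (a) some empty-stack configuration `(X, ε)` recurs, or (b) from
some `(X, σ)` the rules lead back to `(X, σ·ω)` without the stack ever becoming empty in
between. -/
theorem infinite_rewriting_iff_recurrence {Q Δ : Type*} [Fintype Q] [Fintype Δ]
    (rule : Q → Option Δ → Option (Q × List Δ))
    (hpush : ∀ (X : Q) (σ : Δ) (p : Q × List Δ), rule X (some σ) = some p → p.2.length ≤ 2)
    (hempty : ∀ (X : Q) (p : Q × List Δ), rule X none = some p → p.2.length ≤ 1) :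
    (∃ c : Q × List Δ, InfiniteFrom rule c) ↔
      ((∃ (X : Q) (n : ℕ), 0 < n ∧ iter rule n (X, []) = some (X, [])) ∨
       (∃ (X : Q) (σ : Δ) (ω : List Δ) (n : ℕ), 0 < n ∧
          iter rule n (X, [σ]) = some (X, σ :: ω) ∧
          ∀ k : ℕ, 0 < k → k < n →
            ∃ c' : Q × List Δ, iter rule k (X, [σ]) = some c' ∧ c'.2 ≠ [])) := by
  constructor
  · rintro ⟨c, hc⟩
    set f : ℕ → Q × List Δ := fun n => (iter rule n c).get (hc n) with hfdef
    have hf : ∀ n, iter rule n c = some (f n) := fun n => (Option.some_get (hc n)).symm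
    have hrun : ∀ m k, iter rule k (f m) = some (f (m + k)) := by
      intro m k
      have h := iter_add rule m k c
      rw [hf, hf] at h
      simpa using h.symm
    by_cases hinf : {n : ℕ | (f n).2 = []}.Infinite
    · -- infinitely many empty-stack configurations
      left
      have key : ∀ a b : ℕ, (f a).2 = [] → (f b).2 = [] → a < b → (f a).1 = (f b).1 →
          (∃ (X : Q) (n : ℕ), 0 < n ∧ iter rule n (X, []) = some (X, [])) := by
        intro a b hea heb hab hst
        refine ⟨(f a).1, b - a, by omega, ?_⟩
        have h1 : f a = ((f a).1, ([] : List Δ)) := by rw [← hea]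
        have h2 : f b = ((f a).1, ([] : List Δ)) := by rw [hst, ← heb]
        have h3 := hrun a (b - a)
        rw [show a + (b - a) = b by omega, h1, h2] at h3
        exact h3
      obtain ⟨a, ha, b, hb, hab, heq⟩ :=
        hinf.exists_ne_map_eq_of_mapsTo (f := fun n => (f n).1)
          (Set.mapsTo_univ _ _) Set.finite_univ
      rcases hab.lt_or_gt with h' | h'
      · exact key a b ha hb h' heq
      · exact key b a hb ha h' heq.symm
    · -- eventually the stack is never empty
      right
      rw [Set.not_infinite] at hinf
      obtain ⟨N0, hN0⟩ := hinf.bddAbove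
      have hN : ∀ n, N0 + 1 ≤ n → (f n).2 ≠ [] := by
        intro n hn h
        have := hN0 (Set.mem_setOf.mpr h)
        omega
      set N := N0 + 1 with hNdef
      set T : Set ℕ := {n | N ≤ n ∧ ∀ m, n ≤ m → (f n).2.length ≤ (f m).2.length} with hT
      have hTinf : T.Infinite := by
        apply Set.infinite_of_forall_exists_gt
        intro M
        have hne' : ((fun j => (f j).2.length) '' {j | max (M + 1) N ≤ j}).Nonempty :=
          ⟨(f (max (M + 1) N)).2.length, max (M + 1) N, Set.mem_setOf.mpr le_rfl, rfl⟩
        obtain ⟨n, hn, hval⟩ := Nat.sInf_mem hne'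
        simp only [Set.mem_setOf_eq] at hn
        refine ⟨n, ⟨by omega, ?_⟩, by omega⟩
        intro m hm
        have : (f n).2.length = sInf ((fun j => (f j).2.length) '' {j | max (M + 1) N ≤ j}) :=
          hval
        rw [this]
        exact Nat.sInf_le ⟨m, by simp only [Set.mem_setOf_eq]; omega, rfl⟩
      have key : ∀ a b : ℕ, a ∈ T → b ∈ T → a < b →
          (f a).1 = (f b).1 → (f a).2.head? = (f b).2.head? →
          (∃ (X : Q) (σ : Δ) (ω : List Δ) (n : ℕ), 0 < n ∧
            iter rule n (X, [σ]) = some (X, σ :: ω) ∧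
            ∀ k : ℕ, 0 < k → k < n →
              ∃ c' : Q × List Δ, iter rule k (X, [σ]) = some c' ∧ c'.2 ≠ []) := by
        intro a b hA hB hab h1 h2
        obtain ⟨haN, hamin⟩ := hA
        obtain ⟨σ, S, hstack⟩ : ∃ σ S, (f a).2 = σ :: S := by
          cases hs : (f a).2 with
          | nil => exact absurd hs (hN a haN)
          | cons σ S => exact ⟨σ, S, rfl⟩
        have hfa : f a = ((f a).1, σ :: S) := by rw [← hstack]
        have hyp : ∀ j ≤ b - a, ∃ c, iter rule j ((f a).1, [σ] ++ S) = some c ∧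
            S.length < c.2.length := by
          intro j hj
          refine ⟨f (a + j), ?_, ?_⟩
          · rw [show ([σ] ++ S : List Δ) = σ :: S from rfl, ← hfa]
            exact hrun a j
          · have hm := hamin (a + j) (by omega)
            rw [hstack] at hm
            simp only [List.length_cons] at hm
            omega
        obtain ⟨Y, v, hv, hs1, hs2⟩ := strip rule (b - a) (f a).1 [σ] S hyp
        have hfb : f b = (Y, v ++ S) := by
          have h3 := hrun a (b - a)
          rw [show a + (b - a) = b by omega, hfa] at h3
          rw [show ((f a).1, σ :: S) = ((f a).1, [σ] ++ S) from rfl, hs1] at h3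
          exact Option.some.inj h3.symm
        have hY : Y = (f a).1 := by rw [h1, hfb]
        obtain ⟨τ, u, rfl⟩ : ∃ τ u, v = τ :: u := by
          cases v with
          | nil => exact absurd rfl hv
          | cons τ u => exact ⟨τ, u, rfl⟩
        have hτ : τ = σ := by
          have := h2
          rw [hstack, hfb] at this
          simp at this
          exact this.symm
        rw [hτ, hY] at hs2
        refine ⟨(f a).1, σ, u, b - a, by omega, hs2, ?_⟩
        intro k hk0 hkb
        obtain ⟨Y', v', hv', -, h2'⟩ :=
          strip rule k (f a).1 [σ] S (fun j hj => hyp j (by omega))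
        exact ⟨(Y', v'), h2', hv'⟩
      obtain ⟨a, ha, b, hb, hab, heq⟩ :=
        hTinf.exists_ne_map_eq_of_mapsTo (f := fun n => ((f n).1, (f n).2.head?))
          (Set.mapsTo_univ _ _) Set.finite_univ
      simp only [Prod.mk.injEq] at heq
      rcases hab.lt_or_gt with h' | h'
      · exact key a b ha hb h' heq.1 heq.2
      · exact key b a hb ha h' heq.1.symm heq.2.symm
  · rintro (⟨X, n, hn, hit⟩ | ⟨X, σ, ω, n, hn, hit, hmid⟩)
    · refine ⟨(X, []), fun k => ?_⟩
      have hj : ∀ j : ℕ, iter rule (j * n) (X, ([] : List Δ)) = some (X, []) := by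
        intro j
        induction j with
        | zero => simp [iter]
        | succ j ih =>
          have h1 : (j + 1) * n = j * n + n := by ring
          rw [h1, iter_add, ih]
          simpa using hit
      apply iter_isSome_of_le rule (Nat.le_mul_of_pos_right k hn)
      rw [hj k]; simp
    · refine ⟨(X, [σ]), fun k => ?_⟩
      have hj : ∀ j : ℕ, ∃ ω', iter rule (j * n) (X, [σ]) = some (X, σ :: ω') := by
        intro j
        induction j with
        | zero => exact ⟨[], by simp [iter]⟩
        | succ j ih =>
          obtain ⟨ω', hω'⟩ := ih
          have h1 : (j + 1) * n = j * n + n := by ring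
          have h2 := dilute rule n X [σ] ω' X (σ :: ω) (by
            intro j hjn
            rcases Nat.eq_zero_or_pos j with rfl | hj0
            · exact ⟨(X, [σ]), by simp [iter], by simp⟩
            · exact hmid j hj0 hjn) hit
          refine ⟨ω ++ ω', ?_⟩
          rw [h1, iter_add, hω']
          simpa using h2
      obtain ⟨ω', hω'⟩ := hj k
      apply iter_isSome_of_le rule (Nat.le_mul_of_pos_right k hn)
      rw [hω']; simp
end

section
/- Loop-freeness of a deterministic ε-transition structure on a finite state set with a counter is characterized by finite detection: for a deterministic one-counter automaton with state set Q, if a sequence of ε-moves from configuration (q, n) does not reach a reading configuration within |Q|·(n + |Q| + 1) steps, then the ε-sequence from (q, n) is infinite. -/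
namespace OneCounterEps

variable {Q : Type*}

/-- One deterministic ε-move of a one-counter automaton: it depends only on the state and
on whether the counter is zero; `none` means the configuration is a reading configuration
(no ε-move available); otherwise the move yields a new state and a counter change
`δ ∈ {-1, 0, +1}`. -/
def epsStep (eps : Q → Bool → Option (Q × ℤ)) : Q × ℕ → Option (Q × ℕ)
  | (q, n) => (eps q (n == 0)).map fun p => (p.1, (↑n + p.2).toNat)

/-- Running `m` ε-moves: `none` as soon as a reading configuration is met. -/
def run (eps : Q → Bool → Option (Q × ℤ)) : ℕ → Q × ℕ → Option (Q × ℕ)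
  | 0, c => some c
  | m + 1, c => (epsStep eps c).bind (run eps m)

end OneCounterEps

namespace OneCounterEpsAux

open OneCounterEps

variable {Q : Type*} (eps : Q → Bool → Option (Q × ℤ))

lemma epsStep_eq (c : Q × ℕ) :
    epsStep eps c = (eps c.1 (c.2 == 0)).map fun p => (p.1, ((↑c.2 : ℤ) + p.2).toNat) := rfl

lemma run_add (a b : ℕ) (c : Q × ℕ) :
    run eps (a + b) c = (run eps a c).bind (run eps b) := by
  induction a generalizing c with
  | zero => simp [run]
  | succ a ih =>
    have : a + 1 + b = (a + b) + 1 := by omega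
    rw [this, run, run, Option.bind_assoc]
    cases epsStep eps c with
    | none => simp
    | some c' => simp [ih]

lemma isSome_mono {a b : ℕ} (hab : a ≤ b) {c : Q × ℕ}
    (h : (run eps b c).isSome) : (run eps a c).isSome := by
  rw [show b = a + (b - a) by omega, run_add] at h
  cases hr : run eps a c with
  | none => rw [hr] at h; simp at h
  | some _ => simp

lemma run_sub {i j : ℕ} (hij : i ≤ j) {c ci cj : Q × ℕ}
    (hi : run eps i c = some ci) (hj : run eps j c = some cj) :
    run eps (j - i) ci = some cj := by
  rw [show j = i + (j - i) by omega, run_add, hi] at hj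
  simpa using hj

lemma run_loop {d : ℕ} (hd : 1 ≤ d) {c : Q × ℕ} (hl : run eps d c = some c) :
    ∀ m, (run eps m c).isSome := by
  intro m
  induction m using Nat.strong_induction_on with
  | _ m ih =>
    rcases le_or_gt m d with hm | hm
    · exact isSome_mono eps hm (by simp [hl])
    · have : run eps m c = run eps (m - d) c := by
        rw [show m = d + (m - d) by omega, run_add, hl]; simp
      rw [this]
      exact ih (m - d) (by omega)

lemma run_shift (hbound : ∀ (q : Q) (z : Bool) (p : Q × ℤ), eps q z = some p → |p.2| ≤ 1)
    (s : ℕ) : ∀ (d : ℕ) (c c' : Q × ℕ), run eps d c = some c' →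
    (∀ i ci, i < d → run eps i c = some ci → 0 < ci.2) →
    run eps d (c.1, c.2 + s) = some (c'.1, c'.2 + s) := by
  intro d
  induction d with
  | zero => intro c c' hr _; simp [run] at hr ⊢; simp [hr]
  | succ d ih =>
    rintro ⟨p, m⟩ c' hr hpos
    have hm : 0 < m := hpos 0 (p, m) (by omega) (by simp [run])
    have hmz : (m == 0) = false := by simp; omega
    have hmsz : (m + s == 0) = false := by simp; omega
    rw [run] at hr
    rw [run]
    unfold epsStep at hr ⊢
    simp only [hmz, hmsz] at hr ⊢
    cases he : eps p false with
    | none => rw [he] at hr; simp at hr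
    | some pd =>
      rw [he] at hr
      simp only [Option.map_some, Option.bind_some] at hr ⊢
      have hb := hbound p false pd he
      have htn : ((↑(m + s) : ℤ) + pd.2).toNat = ((↑m : ℤ) + pd.2).toNat + s := by
        have h1 : (0:ℤ) ≤ (↑m : ℤ) + pd.2 := by
          have := abs_le.mp hb; omega
        omega
      rw [htn]
      have hstep : ∀ i ci, i < d → run eps i (pd.1, ((↑m : ℤ) + pd.2).toNat) = some ci →
          0 < ci.2 := by
        intro i ci hi hri
        refine hpos (i + 1) ci (by omega) ?_
        rw [run]
        unfold epsStep
        simp only [hmz, he, Option.map_some, Option.bind_some]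
        exact hri
      exact ih (pd.1, ((↑m : ℤ) + pd.2).toNat) c' hr hstep

lemma pump (hbound : ∀ (q : Q) (z : Bool) (p : Q × ℤ), eps q z = some p → |p.2| ≤ 1)
    {d : ℕ} (hd : 1 ≤ d) {p : Q} {a b : ℕ} (hab : a ≤ b)
    (hr : run eps d (p, a) = some (p, b))
    (hpos : ∀ i ci, i < d → run eps i (p, a) = some ci → 0 < ci.2) :
    ∀ m, (run eps m (p, a)).isSome := by
  have key : ∀ k, run eps (k * d) (p, a) = some (p, a + k * (b - a)) := by
    intro k
    induction k with
    | zero => simp [run]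
    | succ k ih =>
      rw [show (k + 1) * d = k * d + d by ring, run_add, ih, Option.bind_some]
      have := run_shift eps hbound (k * (b - a)) d (p, a) (p, b) hr hpos
      simp only at this
      rw [this]
      have h1 : (k + 1) * (b - a) = k * (b - a) + (b - a) := by ring
      congr 2
      rw [h1]
      omega
  intro m
  exact isSome_mono eps (Nat.le_mul_of_pos_right m hd) (by rw [key m]; simp)

lemma pump' (hbound : ∀ (q : Q) (z : Bool) (p : Q × ℤ), eps q z = some p → |p.2| ≤ 1)
    {d : ℕ} (hd : 1 ≤ d) {c c' : Q × ℕ} (h1 : c.1 = c'.1) (h2 : c.2 ≤ c'.2)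
    (hr : run eps d c = some c')
    (hpos : ∀ i ci, i < d → run eps i c = some ci → 0 < ci.2) :
    ∀ m, (run eps m c).isSome := by
  obtain ⟨p, a⟩ := c
  obtain ⟨p', b⟩ := c'
  simp only at h1 h2
  subst h1
  exact pump eps hbound hd h2 hr hpos

lemma conclude {c0 : Q × ℕ} {i : ℕ} {ci : Q × ℕ}
    (hi : run eps i c0 = some ci) (hall : ∀ m, (run eps m ci).isSome) :
    ∀ m, (run eps m c0).isSome := by
  intro m
  rcases le_or_gt m i with hm | hm
  · exact isSome_mono eps hm (by simp [hi])
  · rw [show m = i + (m - i) by omega, run_add, hi, Option.bind_some]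
    exact hall (m - i)

end OneCounterEpsAux



open OneCounterEps OneCounterEpsAux in
/-- Finite detection of ε-loops in deterministic one-counter automata: if the sequence of
ε-moves from configuration `(q, n)` does not reach a reading configuration within
`|Q| · (n + |Q| + 1)` steps, then it never does, i.e. the ε-sequence from `(q, n)` is
infinite. -/
theorem one_counter_eps_loop_detection {Q : Type*} [Fintype Q]
    (eps : Q → Bool → Option (Q × ℤ))
    (hbound : ∀ (q : Q) (z : Bool) (p : Q × ℤ), eps q z = some p → |p.2| ≤ 1)
    (hzero : ∀ (q : Q) (p : Q × ℤ), eps q true = some p → 0 ≤ p.2)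
    (q : Q) (n : ℕ)
    (h : (run eps (Fintype.card Q * (n + Fintype.card Q + 1)) (q, n)).isSome) :
    ∀ m : ℕ, (run eps m (q, n)).isSome := by
  classical
  set K := Fintype.card Q with hK
  set N := K * (n + K + 1) with hN
  set c : ℕ → Q × ℕ := fun i => (run eps i (q, n)).getD (q, n) with hc
  have hrun : ∀ i, i ≤ N → run eps i (q, n) = some (c i) := by
    intro i hi
    have hs := isSome_mono eps hi h
    rw [hc]
    cases hr : run eps i (q, n) with
    | none => rw [hr] at hs; simp at hs
    | some x => simp [hr]
  have hc0 : c 0 = (q, n) := by simp [hc, run]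
  -- one-step counter bound
  have hcnt : ∀ i, i < N → (c i).2 ≤ (c (i + 1)).2 + 1 ∧ (c (i + 1)).2 ≤ (c i).2 + 1 := by
    intro i hi
    have h1 := run_sub eps (Nat.le_succ i) (hrun i (by omega)) (hrun (i + 1) (by omega))
    rw [show i + 1 - i = 1 by omega, run] at h1
    cases h2 : epsStep eps (c i) with
    | none => rw [h2] at h1; simp at h1
    | some x =>
      rw [h2] at h1
      simp [run] at h1
      rw [epsStep_eq] at h2
      cases he : eps (c i).1 ((c i).2 == 0) with
      | none => rw [he] at h2; simp at h2
      | some pd =>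
        rw [he] at h2
        simp only [Option.map_some, Option.some_inj] at h2
        have hb := abs_le.mp (hbound _ _ pd he)
        have : (c (i + 1)).2 = (((c i).2 : ℤ) + pd.2).toNat := by rw [← h1, ← h2]
        omega
  -- main case split
  by_cases hsmall : ∀ i, i ≤ N → (c i).2 ≤ n + K
  · -- all counters small: exact repetition of a configuration
    have hlt : Fintype.card (Q × Fin (n + K + 1)) < Fintype.card (Fin (N + 1)) := by
      simp [Fintype.card_prod, Fintype.card_fin, hN, hK]
    obtain ⟨a, b, hab, hfab⟩ := Fintype.exists_ne_map_eq_of_card_lt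
      (fun i : Fin (N + 1) =>
        ((c i.val).1, (⟨(c i.val).2, by
          have := hsmall i.val (by omega); omega⟩ : Fin (n + K + 1)))) hlt
    have hceq : c a.val = c b.val := by
      have h1 := congrArg Prod.fst hfab
      have h2 := congrArg (fun x => (Prod.snd x : Fin (n + K + 1)).val) hfab
      simp only at h1 h2
      exact Prod.ext h1 h2
    have hne : a.val ≠ b.val := fun hv => hab (Fin.ext hv)
    -- wlog i < j
    obtain ⟨i, j, hij, hjN, hcc⟩ : ∃ i j, i < j ∧ j ≤ N ∧ c i = c j := by
      rcases lt_or_gt_of_ne hne with hl | hl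
      · exact ⟨a.val, b.val, hl, by omega, hceq⟩
      · exact ⟨b.val, a.val, hl, by omega, hceq.symm⟩
    have hd := run_sub eps (le_of_lt hij) (hrun i (by omega)) (hrun j hjN)
    rw [← hcc] at hd
    exact conclude eps (hrun i (by omega)) (run_loop eps (by omega) hd)
  · -- counter gets large: pumping
    push_neg at hsmall
    obtain ⟨i0, hi0N, hi0⟩ := hsmall
    have hex : ∃ t, t ≤ N ∧ n + K < (c t).2 := ⟨i0, hi0N, hi0⟩
    set t0 := Nat.find hex with ht0
    obtain ⟨ht0N, ht0big⟩ := Nat.find_spec hex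
    rw [← ht0] at ht0N ht0big
    have ht0min : ∀ l, l < t0 → (c l).2 ≤ n + K := by
      intro l hl
      have := Nat.find_min hex hl
      push_neg at this
      exact this (by omega)
    have ht0pos : 1 ≤ t0 := by
      rcases Nat.eq_zero_or_pos t0 with h0 | h0
      · rw [h0, hc0] at ht0big
        exact absurd ht0big (by simp)
      · exact h0
    have ht0val : (c t0).2 = n + K + 1 := by
      have h1 := ht0min (t0 - 1) (by omega)
      have h2 := (hcnt (t0 - 1) (by omega)).2
      rw [show t0 - 1 + 1 = t0 by omega] at h2
      omega
    -- last-visit indices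
    set S : ℕ → Finset ℕ :=
      fun k => (Finset.range (t0 + 1)).filter (fun l => (c l).2 ≤ n + k) with hS
    have hSne : ∀ k, (S k).Nonempty := by
      intro k
      refine ⟨0, ?_⟩
      simp [hS, hc0]
    set g : ℕ → ℕ := fun k => (S k).max' (hSne k) with hg
    have hgS : ∀ k, g k ∈ S k := fun k => (S k).max'_mem (hSne k)
    have hg_mem : ∀ k, g k ≤ t0 ∧ (c (g k)).2 ≤ n + k := by
      intro k
      have h1 := hgS k
      rw [hS] at h1
      simp only [Finset.mem_filter, Finset.mem_range] at h1
      exact ⟨by omega, h1.2⟩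
    have hafter : ∀ k l, g k < l → l ≤ t0 → n + k < (c l).2 := by
      intro k l hgl hlt
      by_contra hcon
      push_neg at hcon
      have hmem : l ∈ S k := by
        rw [hS]
        simp only [Finset.mem_filter, Finset.mem_range]
        exact ⟨by omega, hcon⟩
      have hle : l ≤ g k := (S k).le_max' l hmem
      omega
    have hgval : ∀ k, 1 ≤ k → k ≤ K + 1 → (c (g k)).2 = n + k := by
      intro k hk1 hk2
      rcases eq_or_lt_of_le (hg_mem k).1 with heq | hlt
      · have := (hg_mem k).2
        rw [heq, ht0val] at this ⊢
        omega
      · have h1 := hafter k (g k + 1) (by omega) (by omega)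
        have h2 := hcnt (g k) (by omega)
        have h3 := (hg_mem k).2
        omega
    -- pigeonhole on states of last-visit configurations
    have hcardQ : Fintype.card Q < Fintype.card (Fin (K + 1)) := by
      rw [Fintype.card_fin]
      omega
    obtain ⟨a, b, hab, hfab⟩ := Fintype.exists_ne_map_eq_of_card_lt
      (fun j : Fin (K + 1) => (c (g (j.val + 1))).1) hcardQ
    obtain ⟨k1, k2, hk12, hk1l, hk2u, hst⟩ :
        ∃ k1 k2, k1 < k2 ∧ 1 ≤ k1 ∧ k2 ≤ K + 1 ∧ (c (g k1)).1 = (c (g k2)).1 := by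
      rcases lt_or_gt_of_ne (fun hv => hab (Fin.ext hv) : a.val ≠ b.val) with hl | hl
      · exact ⟨a.val + 1, b.val + 1, by omega, by omega, by omega, hfab⟩
      · exact ⟨b.val + 1, a.val + 1, by omega, by omega, by omega, hfab.symm⟩
    have hk1u : k1 ≤ K + 1 := by omega
    have hk2l : 1 ≤ k2 := by omega
    have hv1 := hgval k1 hk1l hk1u
    have hv2 := hgval k2 hk2l hk2u
    set i := g k1 with hi
    set j := g k2 with hj
    have hij : i < j := by
      rcases lt_trichotomy i j with h' | h' | h'
      · exact h'
      · rw [h'] at hv1; omega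
      · have := hafter k2 i h' (hg_mem k1).1
        omega
    have hjt0 : j ≤ t0 := (hg_mem k2).1
    have hd := run_sub eps (le_of_lt hij) (hrun i (by omega)) (hrun j (by omega))
    have hpos : ∀ m cm, m < j - i → run eps m (c i) = some cm → 0 < cm.2 := by
      intro m cm hm hrm
      have hiN : i + m ≤ N := by omega
      have : run eps (i + m) (q, n) = some cm := by
        rw [run_add, hrun i (by omega), Option.bind_some, hrm]
      rw [hrun (i + m) hiN] at this
      have hcm : cm = c (i + m) := by exact (Option.some_inj.mp this).symm
      subst hcm
      rcases Nat.eq_zero_or_pos m with hm0 | hm0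
      · subst hm0; simp only [Nat.add_zero]; omega
      · have := hafter k1 (i + m) (by omega) (by omega)
        omega
    have hall := pump' eps hbound (d := j - i) (by omega) hst (by omega) hd hpos
    exact conclude eps (hrun i (by omega)) hall
end
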